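/- arXiv:1912.03220 — 2 statements merged into one kernel-verified Lean document; each statement's English description precedes it below -/
import Mathlib

section
/- Let F_t = {f_{(i,t)}(x) := t·f_i(x) + q_i : 1 ≤ i ≤ N} be a one-parameter affine family on ℝ^d with t_0 = 1/ρ(F). The following are equivalent: (1) F_t is semi-linear; (2) for each i = 1, …, N, the point q_i is the unique fixed point of f_{(i,t)} for all t ∈ [0, t_0). Moreover, if these hold then q_i is also a fixed point of f_{(i,t_0)} for all i. -/
open Metric Filter Set
open scoped RealInnerProductSpace

noncomputable section

/-- The Hutchinson operator associated with a family of maps. -/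
def hutch {ι E : Type*} (f : ι → E → E) (K : Set E) : Set E := ⋃ i, f i '' K

/-- `A` is the attractor of the IFS `f`: `A` is a nonempty compact set such that the iterates
of the Hutchinson operator applied to any nonempty compact set converge to `A` in the
Hausdorff metric. -/
def IsAttractor {ι E : Type*} [MetricSpace E] (f : ι → E → E) (A : Set E) : Prop :=
  A.Nonempty ∧ IsCompact A ∧
    ∀ K : Set E, K.Nonempty → IsCompact K →
      Tendsto (fun n : ℕ => hausdorffDist ((hutch f)^[n] K) A) atTop (nhds 0)

/-- The joint spectral radius of a finite family of continuous linear maps. -/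
def jsr {E : Type*} [NormedAddCommGroup E] [NormedSpace ℝ E] {N : ℕ}
    (L : Fin N → E →L[ℝ] E) : ℝ :=
  limsup (fun k : ℕ =>
    (⨆ σ : Fin k → Fin N, ‖(List.ofFn fun j : Fin k => L (σ j)).prod‖) ^ ((1 : ℝ) / (k : ℝ)))
    atTop

/-- The one-parameter affine family `f_{(i,t)}(x) = t • f_i(x) + q_i` where
`f_i(x) = L_i x + a_i`. -/
def fam {E : Type*} [NormedAddCommGroup E] [NormedSpace ℝ E] {N : ℕ}
    (L : Fin N → E →L[ℝ] E) (a q : Fin N → E) (t : ℝ) (i : Fin N) (x : E) : E :=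
  t • (L i x + a i) + q i

/-- The family is linear: every `f_{(i,t)}`, `t ∈ [0, t₀)`, is conjugate to a linear map by a
single invertible affine map `h` independent of `i` and `t`. -/
def IsLinearFamily {E : Type*} [NormedAddCommGroup E] [NormedSpace ℝ E] {N : ℕ}
    (L : Fin N → E →L[ℝ] E) (a q : Fin N → E) : Prop :=
  ∃ h : E ≃ᵃ[ℝ] E, ∀ i : Fin N, ∀ t : ℝ, 0 ≤ t → t < 1 / jsr L →
    ∃ M : E →ₗ[ℝ] E, ∀ x, fam L a q t i x = h.symm (M (h x))

/-- The family is quasi-linear: for each `t ∈ [0, t₀)` there is an invertible affine map `h_t`,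
independent of `i`, conjugating every `f_{(i,t)}` to a linear map. -/
def IsQuasiLinearFamily {E : Type*} [NormedAddCommGroup E] [NormedSpace ℝ E] {N : ℕ}
    (L : Fin N → E →L[ℝ] E) (a q : Fin N → E) : Prop :=
  ∀ t : ℝ, 0 ≤ t → t < 1 / jsr L → ∃ h : E ≃ᵃ[ℝ] E, ∀ i : Fin N,
    ∃ M : E →ₗ[ℝ] E, ∀ x, fam L a q t i x = h.symm (M (h x))

/-- The family is semi-linear: for each `i` there is an invertible affine map `h_i`,
independent of `t`, conjugating `f_{(i,t)}` to a linear map for all `t ∈ [0, t₀)`. -/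
def IsSemiLinearFamily {E : Type*} [NormedAddCommGroup E] [NormedSpace ℝ E] {N : ℕ}
    (L : Fin N → E →L[ℝ] E) (a q : Fin N → E) : Prop :=
  ∀ i : Fin N, ∃ h : E ≃ᵃ[ℝ] E, ∀ t : ℝ, 0 ≤ t → t < 1 / jsr L →
    ∃ M : E →ₗ[ℝ] E, ∀ x, fam L a q t i x = h.symm (M (h x))

/-- The hyperplane `{x | φ x = c}` (with `φ` a nonzero linear functional) separates `S`:
it misses `S` and `S` meets both open half-spaces. -/
def SeparatesHyp {E : Type*} [AddCommGroup E] [Module ℝ E]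
    (φ : E →ₗ[ℝ] ℝ) (c : ℝ) (S : Set E) : Prop :=
  φ ≠ 0 ∧ (∀ x ∈ S, φ x ≠ c) ∧ (∃ x ∈ S, φ x < c) ∧ (∃ x ∈ S, c < φ x)

/-- A set is strongly disconnected if some hyperplane separates it. -/
def StronglyDisconnected {E : Type*} [AddCommGroup E] [Module ℝ E] (S : Set E) : Prop :=
  ∃ (φ : E →ₗ[ℝ] ℝ) (c : ℝ), SeparatesHyp φ c S

/-- A set is weakly connected if no hyperplane separates it. -/
def WeaklyConnected {E : Type*} [AddCommGroup E] [Module ℝ E] (S : Set E) : Prop :=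
  ¬ StronglyDisconnected S

/-- A weak component of a compact set `S` is a maximal weakly connected compact subset of `S`. -/
def IsWeakComponent {E : Type*} [NormedAddCommGroup E] [NormedSpace ℝ E]
    (S C : Set E) : Prop :=
  C.Nonempty ∧ C ⊆ S ∧ IsCompact C ∧ WeaklyConnected C ∧
    ∀ C' : Set E, C' ⊆ S → IsCompact C' → WeaklyConnected C' → C ⊆ C' → C' = C

/-- A (nondegenerate right circular) cone with apex `x`, axis direction `v`, radius `r` and
half-angle `θ`. -/
def coneSet {E : Type*} [NormedAddCommGroup E] [InnerProductSpace ℝ E]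
    (x v : E) (r θ : ℝ) : Set E :=
  {y | ‖y - x‖ ≤ r ∧ ‖y - x‖ * Real.cos θ ≤ ⟪y - x, v⟫}

/-- A boundary point `x` of `K` is a cusp of `K` if no cone with apex `x` is contained in `K`. -/
def IsCuspOfSet {E : Type*} [NormedAddCommGroup E] [InnerProductSpace ℝ E]
    (K : Set E) (x : E) : Prop :=
  x ∈ frontier K ∧ ∀ (v : E) (r θ : ℝ), ‖v‖ = 1 → 0 < r → 0 < θ → θ < Real.pi / 2 →
    ¬ coneSet x v r θ ⊆ K

/-- The one-parameter family is tame: whenever the attractor `A_t` has nonempty interior,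
some fixed point of a map of `F_t` is not a cusp of `A_t`. -/
def TameFamily {E : Type*} [NormedAddCommGroup E] [InnerProductSpace ℝ E] {N : ℕ}
    (L : Fin N → E →L[ℝ] E) (a q : Fin N → E) : Prop :=
  ∀ t : ℝ, 0 ≤ t → t < 1 / jsr L → ∀ A : Set E, IsAttractor (fam L a q t) A →
    (interior A).Nonempty → ∃ (i : Fin N) (x : E), fam L a q t i x = x ∧ ¬ IsCuspOfSet A x

end

lemma eigAux {E : Type*} [NormedAddCommGroup E] [NormedSpace ℝ E] {N : ℕ}
    (L : Fin N → E →L[ℝ] E) {i : Fin N} {c : ℝ} (hc : 0 ≤ c)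
    {y : E} (hy : y ≠ 0) (h : L i y = c • y) : c ≤ jsr L := by
  haveI : Nonempty (Fin N) := ⟨i⟩
  set u : ℕ → ℝ := fun k =>
    (⨆ σ : Fin k → Fin N, ‖(List.ofFn fun j : Fin k => L (σ j)).prod‖) ^ ((1 : ℝ) / (k : ℝ))
    with hu
  set C : ℝ := 1 + ∑ j, ‖L j‖ with hCdef
  have hC1 : 1 ≤ C := le_add_of_nonneg_right (Finset.sum_nonneg fun _ _ => norm_nonneg _)
  have hC0 : 0 ≤ C := le_trans zero_le_one hC1
  have hCj : ∀ j, ‖L j‖ ≤ C := by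
    intro j
    have := Finset.single_le_sum (f := fun j => ‖L j‖) (fun _ _ => norm_nonneg _)
      (Finset.mem_univ j)
    linarith
  have hlist : ∀ l : List (E →L[ℝ] E), (∀ f ∈ l, ‖f‖ ≤ C) → ‖l.prod‖ ≤ C ^ l.length := by
    intro l
    induction l with
    | nil => intro _; simp only [List.prod_nil, List.length_nil, pow_zero]; exact ContinuousLinearMap.norm_id_le
    | cons f l ih =>
      intro hf
      rw [List.prod_cons, List.length_cons, pow_succ']
      calc ‖f * l.prod‖ ≤ ‖f‖ * ‖l.prod‖ := norm_mul_le _ _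
        _ ≤ C * C ^ l.length := by
            apply mul_le_mul (hf f List.mem_cons_self) (ih fun g hg => hf g (List.mem_cons_of_mem f hg)) (norm_nonneg _) hC0
  -- supremum bounds
  have hSnonneg : ∀ k : ℕ, (0:ℝ) ≤ ⨆ σ : Fin k → Fin N, ‖(List.ofFn fun j : Fin k => L (σ j)).prod‖ :=
    fun k => Real.iSup_nonneg fun σ => norm_nonneg _
  have hSle : ∀ k : ℕ, (⨆ σ : Fin k → Fin N, ‖(List.ofFn fun j : Fin k => L (σ j)).prod‖) ≤ C ^ k := by
    intro k
    apply ciSup_le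
    intro σ
    have := hlist (List.ofFn fun j : Fin k => L (σ j)) (by
      intro f hf
      obtain ⟨j, rfl⟩ := List.mem_ofFn.mp hf
      exact hCj _)
    simpa using this
  have hub : ∀ k : ℕ, u k ≤ C := by
    intro k
    rcases Nat.eq_zero_or_pos k with rfl | hk
    · simpa [hu] using hC1
    · have hk0 : (k:ℝ) ≠ 0 := Nat.cast_ne_zero.mpr hk.ne'
      have h1 : u k ≤ (C ^ k) ^ ((1:ℝ)/(k:ℝ)) :=
        Real.rpow_le_rpow (hSnonneg k) (hSle k) (by positivity)
      have h2 : (C ^ k : ℝ) ^ ((1:ℝ)/(k:ℝ)) = C := by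
        rw [← Real.rpow_natCast C k, ← Real.rpow_mul hC0]
        rw [mul_one_div, div_self hk0, Real.rpow_one]
      rw [h2] at h1
      exact h1
  have hbdd : IsBoundedUnder (· ≤ ·) atTop u := Filter.isBoundedUnder_of ⟨C, hub⟩
  -- lower bound
  have hiter : ∀ k : ℕ, ((L i) ^ k) y = c ^ k • y := by
    intro k
    induction k with
    | zero => simp
    | succ k ih =>
      rw [pow_succ, ContinuousLinearMap.mul_apply, h, map_smul, ih, smul_smul, pow_succ, mul_comm]
  have hlb : ∀ k : ℕ, 1 ≤ k → c ≤ u k := by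
    intro k hk
    have hk0 : (k:ℝ) ≠ 0 := Nat.cast_ne_zero.mpr (by omega)
    have hy' : 0 < ‖y‖ := norm_pos_iff.mpr hy
    have h1 : c ^ k * ‖y‖ ≤ ‖(L i) ^ k‖ * ‖y‖ := by
      have := ContinuousLinearMap.le_opNorm ((L i) ^ k) y
      rw [hiter k, norm_smul, Real.norm_eq_abs, abs_of_nonneg (pow_nonneg hc k)] at this
      exact this
    have h2 : c ^ k ≤ ‖(L i) ^ k‖ := le_of_mul_le_mul_right h1 hy'
    have h3 : ‖(L i) ^ k‖ ≤ ⨆ σ : Fin k → Fin N, ‖(List.ofFn fun j : Fin k => L (σ j)).prod‖ := by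
      have hb : BddAbove (Set.range fun σ : Fin k → Fin N => ‖(List.ofFn fun j : Fin k => L (σ j)).prod‖) :=
        (Set.finite_range _).bddAbove
      have := le_ciSup hb (fun _ : Fin k => i)
      simpa [List.ofFn_const, List.prod_replicate] using this
    have h4 : (c ^ k : ℝ) ^ ((1:ℝ)/(k:ℝ)) ≤ u k :=
      Real.rpow_le_rpow (pow_nonneg hc k) (le_trans h2 h3) (by positivity)
    have h5 : (c ^ k : ℝ) ^ ((1:ℝ)/(k:ℝ)) = c := by
      rw [← Real.rpow_natCast c k, ← Real.rpow_mul hc]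
      rw [mul_one_div, div_self hk0, Real.rpow_one]
    rwa [h5] at h4
  have hfreq : ∃ᶠ k in atTop, c ≤ u k :=
    ((eventually_ge_atTop 1).mono fun k hk => hlb k hk).frequently
  exact Filter.le_limsup_of_frequently_le hfreq hbdd


/-- A one-parameter affine family is semi-linear iff for each `i` the point
`q_i` is the unique fixed point of `f_{(i,t)}` for all `t ∈ [0, t₀)`. Moreover, in that case
`q_i` is also a fixed point of `f_{(i,t₀)}` for all `i`. -/
theorem stmt5 {d N : ℕ} (hN : 2 ≤ N)
    (L : Fin N → EuclideanSpace ℝ (Fin d) →L[ℝ] EuclideanSpace ℝ (Fin d))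
    (hL : ∀ i, Function.Bijective (L i))
    (a q : Fin N → EuclideanSpace ℝ (Fin d))
    (hρ : 0 < jsr L) :
    (IsSemiLinearFamily L a q ↔
      ∀ (i : Fin N) (t : ℝ), 0 ≤ t → t < 1 / jsr L →
        fam L a q t i (q i) = q i ∧ ∀ x, fam L a q t i x = x → x = q i) ∧
    (IsSemiLinearFamily L a q →
      ∀ i : Fin N, fam L a q (1 / jsr L) i (q i) = q i) := by
  have hρ' : 0 < 1 / jsr L := by positivity
  -- If L i (q i) + a i = 0 then q i is a fixed point of fam t i for every t.
  have fix_of : ∀ (i : Fin N), L i (q i) + a i = 0 → ∀ t : ℝ, fam L a q t i (q i) = q i := by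
    intro i hq t
    simp [fam, hq]
  -- Conversely, from a fixed point at a positive t we recover the identity.
  have id_of_fix : ∀ (i : Fin N) (t : ℝ), 0 < t → fam L a q t i (q i) = q i →
      L i (q i) + a i = 0 := by
    intro i t ht hfix
    have h1 : t • (L i (q i) + a i) = 0 := by
      have : t • (L i (q i) + a i) + q i = q i := hfix
      rwa [add_eq_right] at this
    rcases smul_eq_zero.mp h1 with h | h
    · exact absurd h ht.ne'
    · exact h
  -- uniqueness of the fixed point
  have uniq_of : ∀ (i : Fin N), L i (q i) + a i = 0 → ∀ t : ℝ, 0 ≤ t → t < 1 / jsr L →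
      ∀ x, fam L a q t i x = x → x = q i := by
    intro i hq t ht ht' x hx
    rcases eq_or_lt_of_le ht with h0 | hpos
    · have : (0:ℝ) • (L i x + a i) + q i = x := by rw [h0]; exact hx
      simpa using this.symm
    · by_contra hne
      have hy : x - q i ≠ 0 := sub_ne_zero.mpr hne
      have hLq : L i (q i) = -(a i) := eq_neg_of_add_eq_zero_left hq
      have hfe : t • L i (x - q i) = x - q i := by
        have h2 : t • (L i x + a i) = x - q i := by
          have : t • (L i x + a i) + q i = x := hx
          linear_combination (norm := module) this
        rw [map_sub, hLq, sub_neg_eq_add]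
        exact h2
      have hle : L i (x - q i) = t⁻¹ • (x - q i) := by
        have := congrArg (fun z => t⁻¹ • z) hfe
        simpa [smul_smul, inv_mul_cancel₀ hpos.ne'] using this
      have h3 : t⁻¹ ≤ jsr L := eigAux L (inv_nonneg.mpr ht) hy hle
      have h4 : t * jsr L < 1 := (lt_div_iff₀ hρ).mp ht'
      have h5 : t * t⁻¹ ≤ t * jsr L := mul_le_mul_of_nonneg_left h3 hpos.le
      rw [mul_inv_cancel₀ hpos.ne'] at h5
      linarith
  -- Semi-linearity forces L i (q i) + a i = 0.
  have hq_of_sl : IsSemiLinearFamily L a q → ∀ i : Fin N, L i (q i) + a i = 0 := by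
    intro hsl i
    obtain ⟨h, hh⟩ := hsl i
    obtain ⟨M0, hM0⟩ := hh 0 le_rfl hρ'
    have hq0 : q i = h.symm 0 := by
      have := hM0 (h.symm 0)
      simpa [fam] using this
    have hq0' : h (q i) = 0 := by rw [hq0, AffineEquiv.apply_symm_apply]
    set t' : ℝ := 1 / jsr L / 2 with ht'def
    obtain ⟨M, hM⟩ := hh t' (half_pos hρ').le (half_lt_self hρ')
    have hfix : fam L a q t' i (q i) = q i := by
      rw [hM (q i), hq0', map_zero, ← hq0]
    exact id_of_fix i t' (half_pos hρ') hfix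
  refine ⟨⟨?_, ?_⟩, ?_⟩
  · intro hsl i t ht ht'
    have hq := hq_of_sl hsl i
    exact ⟨fix_of i hq t, fun x hx => uniq_of i hq t ht ht' x hx⟩
  · intro hfix i
    have hq : L i (q i) + a i = 0 :=
      id_of_fix i (1 / jsr L / 2) (half_pos hρ')
        ((hfix i (1 / jsr L / 2) (half_pos hρ').le (half_lt_self hρ')).1)
    have hLq : L i (q i) = -(a i) := eq_neg_of_add_eq_zero_left hq
    refine ⟨AffineEquiv.constVAdd ℝ _ (-(q i)), ?_⟩
    intro t _ _
    refine ⟨t • (L i : EuclideanSpace ℝ (Fin d) →ₗ[ℝ] EuclideanSpace ℝ (Fin d)), fun x => ?_⟩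
    simp only [AffineEquiv.constVAdd_apply, AffineEquiv.constVAdd_symm,
      LinearMap.smul_apply, ContinuousLinearMap.coe_coe, vadd_eq_add, neg_neg]
    rw [show -q i + x = x - q i by abel, map_sub, hLq, sub_neg_eq_add, fam]
    abel
  · intro hsl i
    exact fix_of i (hq_of_sl hsl i) _
end

section
/- Let A be the attractor of an IFS F on ℝ^d. If there exist a closed ball B ⊆ ℝ^d with nonempty interior and a positive integer n_0 such that B ⊆ F^{n_0}(B) (the n_0-fold iterate of the Hutchinson operator applied to B), then B ⊆ A; in particular, A has nonempty interior. -/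
open Metric Filter Set
open scoped RealInnerProductSpace

/-- Let `A` be the attractor of an IFS `F` on `ℝ^d`. If `B` is a closed
ball of positive radius and `n₀` a positive integer with `B ⊆ F^{n₀}(B)`, then `B ⊆ A`; in
particular `A` has nonempty interior. -/
theorem stmt15 {d N : ℕ} (hN : 2 ≤ N)
    (L : Fin N → EuclideanSpace ℝ (Fin d) →L[ℝ] EuclideanSpace ℝ (Fin d))
    (hL : ∀ i, Function.Bijective (L i))
    (a : Fin N → EuclideanSpace ℝ (Fin d))
    (f : Fin N → EuclideanSpace ℝ (Fin d) → EuclideanSpace ℝ (Fin d))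
    (hf : ∀ i x, f i x = L i x + a i)
    (A : Set (EuclideanSpace ℝ (Fin d))) (hA : IsAttractor f A)
    (x₀ : EuclideanSpace ℝ (Fin d)) (r : ℝ) (hr : 0 < r)
    (n₀ : ℕ) (hn₀ : 0 < n₀)
    (hB : closedBall x₀ r ⊆ (hutch f)^[n₀] (closedBall x₀ r)) :
    closedBall x₀ r ⊆ A ∧ (interior A).Nonempty := by
  set B := closedBall x₀ r with hBdef
  have hBne : B.Nonempty := ⟨x₀, mem_closedBall_self hr.le⟩
  have hBc : IsCompact B := isCompact_closedBall _ _
  have hfc : ∀ i, Continuous (f i) := by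
    intro i
    have h1 : f i = fun x => L i x + a i := funext (hf i)
    rw [h1]
    exact (L i).continuous.add continuous_const
  have hcomp : ∀ n, IsCompact ((hutch f)^[n] B) := by
    intro n; induction n with
    | zero => simpa using hBc
    | succ n ih =>
      rw [Function.iterate_succ_apply']
      exact isCompact_iUnion fun i => ih.image (hfc i)
  have hne : ∀ n, ((hutch f)^[n] B).Nonempty := by
    intro n; induction n with
    | zero => simpa using hBne
    | succ n ih =>
      rw [Function.iterate_succ_apply']
      obtain ⟨x, hx⟩ := ih
      exact ⟨f ⟨0, by omega⟩ x, mem_iUnion.2 ⟨_, mem_image_of_mem _ hx⟩⟩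
  have hmono : Monotone (hutch f) := fun s t hst => iUnion_mono fun i => image_mono hst
  have hsub : ∀ k, B ⊆ (hutch f)^[k * n₀] B := by
    intro k; induction k with
    | zero => simp
    | succ k ih =>
      have h2 : (hutch f)^[k * n₀] B ⊆ (hutch f)^[k * n₀] ((hutch f)^[n₀] B) :=
        (hmono.iterate _) hB
      rw [← Function.iterate_add_apply] at h2
      have h3 : (k + 1) * n₀ = k * n₀ + n₀ := by ring
      rw [h3]
      exact ih.trans h2
  have htend := hA.2.2 B hBne hBc
  have hmul : Tendsto (fun k : ℕ => k * n₀) atTop atTop :=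
    tendsto_atTop_atTop.2 fun b => ⟨b, fun k hk => hk.trans (Nat.le_mul_of_pos_right k hn₀)⟩
  have htend' : Tendsto (fun k : ℕ => hausdorffDist ((hutch f)^[k * n₀] B) A) atTop (nhds 0) :=
    htend.comp hmul
  have hBA : B ⊆ A := by
    intro x hx
    have hfin : ∀ k : ℕ, EMetric.hausdorffEdist ((hutch f)^[k * n₀] B) A ≠ ⊤ := fun k =>
      hausdorffEdist_ne_top_of_nonempty_of_bounded (hne _) hA.1
        (hcomp _).isBounded hA.2.1.isBounded
    have hle : ∀ k : ℕ, infDist x A ≤ hausdorffDist ((hutch f)^[k * n₀] B) A := fun k =>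
      infDist_le_hausdorffDist_of_mem (hsub k hx) (hfin k)
    have h0 : infDist x A ≤ 0 := ge_of_tendsto' htend' hle
    have h0' : infDist x A = 0 := le_antisymm h0 infDist_nonneg
    exact (hA.2.1.isClosed.mem_iff_infDist_zero hA.1).2 h0'
  refine ⟨hBA, ⟨x₀, ?_⟩⟩
  exact interior_mono hBA (by simpa using mem_interior_iff_mem_nhds.2 (closedBall_mem_nhds x₀ hr))
end
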